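/- A T-gain graph Φ = (G, φ) on a connected graph G is distance compatible if and only if every block of Φ (with the restricted gain function) is distance compatible. -/

import Mathlib

open Matrix
open scoped Classical

noncomputable section

namespace GG

variable {V : Type*}

/-- The gain of a walk: product of the gains of its oriented edges. -/
def walkGain {G : SimpleGraph V} (φ : V → V → ℂ) {u v : V} (p : G.Walk u v) : ℂ :=
  (p.darts.map (fun d => φ d.toProd.1 d.toProd.2)).prod

/-- `φ` is a `𝕋`-gain function on `G`: unit modulus on edges, inverse under reversal. -/
def IsGain (G : SimpleGraph V) (φ : V → V → ℂ) : Prop :=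
  (∀ i j, G.Adj i j → ‖φ i j‖ = 1) ∧ (∀ i j, G.Adj i j → φ j i = (φ i j)⁻¹)

/-- Adjacency matrix of a gain graph. -/
def gainAdj [Fintype V] [DecidableEq V] (G : SimpleGraph V) (φ : V → V → ℂ) :
    Matrix V V ℂ := fun i j => if G.Adj i j then φ i j else 0

/-- A gain graph is balanced if every cycle has gain 1. -/
def GBalanced (G : SimpleGraph V) (φ : V → V → ℂ) : Prop :=
  ∀ (u : V) (c : G.Walk u u), c.IsCycle → walkGain φ c = 1

/-- All shortest paths between any pair of vertices have the same gain. -/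
def DistCompatible (G : SimpleGraph V) (φ : V → V → ℂ) : Prop :=
  ∀ (s t : V) (p q : G.Walk s t), p.length = G.dist s t → q.length = G.dist s t →
    walkGain φ p = walkGain φ q

/-- The set of gains of shortest `s`-`t` paths. -/
def shortestGains (G : SimpleGraph V) (φ : V → V → ℂ) (s t : V) : Set ℂ :=
  {z | ∃ p : G.Walk s t, p.length = G.dist s t ∧ walkGain φ p = z}

/-- The element of `S` maximizing the real part, ties broken by maximal imaginary part
(correct for finite nonempty sets of gains). -/
def lexMaxGain (S : Set ℂ) : ℂ :=
  ⟨sSup (Complex.re '' S), sSup (Complex.im '' {z ∈ S | z.re = sSup (Complex.re '' S)})⟩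

/-- The element of `S` minimizing the real part, ties broken by minimal imaginary part. -/
def lexMinGain (S : Set ℂ) : ℂ :=
  ⟨sInf (Complex.re '' S), sInf (Complex.im '' {z ∈ S | z.re = sInf (Complex.re '' S)})⟩

/-- The maximum gain distance matrix `D^max_<(Φ)` with respect to a strict order `lt`. -/
def Dmax [Fintype V] [DecidableEq V] (G : SimpleGraph V) (φ : V → V → ℂ)
    (lt : V → V → Prop) : Matrix V V ℂ := fun s t =>
  if lt s t then lexMaxGain (shortestGains G φ s t) * (G.dist s t : ℂ)
  else if lt t s then (starRingEnd ℂ) (lexMaxGain (shortestGains G φ t s)) * (G.dist s t : ℂ)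
  else 0

/-- The minimum gain distance matrix `D^min_<(Φ)` with respect to a strict order `lt`. -/
def Dmin [Fintype V] [DecidableEq V] (G : SimpleGraph V) (φ : V → V → ℂ)
    (lt : V → V → Prop) : Matrix V V ℂ := fun s t =>
  if lt s t then lexMinGain (shortestGains G φ s t) * (G.dist s t : ℂ)
  else if lt t s then (starRingEnd ℂ) (lexMinGain (shortestGains G φ t s)) * (G.dist s t : ℂ)
  else 0

/-- Vertex order independence: the gain distance matrices agree for the standard order
and its reverse. -/
def OrderIndependent [Fintype V] [DecidableEq V] [LinearOrder V] (G : SimpleGraph V)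
    (φ : V → V → ℂ) : Prop :=
  Dmax G φ (· < ·) = Dmax G φ (fun a b => b < a) ∧
  Dmin G φ (· < ·) = Dmin G φ (fun a b => b < a)

/-- The largest (real) eigenvalue of a matrix. -/
def maxEig [Fintype V] [DecidableEq V] (A : Matrix V V ℂ) : ℝ :=
  sSup {r : ℝ | (r : ℂ) ∈ spectrum ℂ A}

/-- The spectral radius of a matrix. -/
def specRad [Fintype V] [DecidableEq V] (A : Matrix V V ℂ) : ℝ :=
  sSup {r : ℝ | ∃ z ∈ spectrum ℂ A, ‖z‖ = r}

/-- The distance matrix of the underlying graph, as a complex matrix. -/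
def distMatrix [Fintype V] [DecidableEq V] (G : SimpleGraph V) : Matrix V V ℂ :=
  fun i j => (G.dist i j : ℂ)

/-- Weighted gain adjacency matrix `A(Φ_w)`. -/
def wGainAdj [Fintype V] [DecidableEq V] (G : SimpleGraph V) (φ : V → V → ℂ)
    (w : V → V → ℝ) : Matrix V V ℂ := fun i j => if G.Adj i j then φ i j * (w i j : ℂ) else 0

/-- Weighted adjacency matrix `A(G_w)` of the underlying weighted graph. -/
def wAdj [Fintype V] [DecidableEq V] (G : SimpleGraph V) (w : V → V → ℝ) :
    Matrix V V ℂ := fun i j => if G.Adj i j then (w i j : ℂ) else 0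


/-- `B` induces a connected subgraph with no cut vertex. -/
def IsBiconnectedSet {V : Type*} (G : SimpleGraph V) (B : Set V) : Prop :=
  (G.induce B).Connected ∧
    ∀ v ∈ B, (B \ {v}).Nonempty → (G.induce (B \ {v})).Connected

/-- `B` is a block of `G`: a maximal set inducing a connected subgraph with no cut vertex. -/
def IsBlock {V : Type*} (G : SimpleGraph V) (B : Set V) : Prop :=
  IsBiconnectedSet G B ∧ ∀ B' : Set V, B ⊆ B' → IsBiconnectedSet G B' → B' = B

section Aux
open SimpleGraph

variable {G : SimpleGraph V} {S B : Set V} {φ : V → V → ℂ}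

@[simp] lemma walkGain_nil {u : V} : walkGain φ (Walk.nil : G.Walk u u) = 1 := rfl

@[simp] lemma walkGain_cons {u v w : V} (h : G.Adj u v) (p : G.Walk v w) :
    walkGain φ (Walk.cons h p) = φ u v * walkGain φ p := by
  simp [walkGain]

lemma walkGain_append {u v w : V} (p : G.Walk u v) (q : G.Walk v w) :
    walkGain φ (p.append q) = walkGain φ p * walkGain φ q := by
  simp [walkGain, Walk.darts_append]

/-- Lift a walk of `G` with support in `S` to a walk of `G.induce S`. -/
lemma exists_upWalk {a b : V} (w : G.Walk a b) (ha : a ∈ S) (hb : b ∈ S)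
    (hw : ∀ x ∈ w.support, x ∈ S) :
    ∃ W : (G.induce S).Walk ⟨a, ha⟩ ⟨b, hb⟩, W.length = w.length ∧
      walkGain (fun i j : S => φ i j) W = walkGain φ w := by
  induction w with
  | nil => exact ⟨Walk.nil, rfl, rfl⟩
  | @cons a c b h w ih =>
      have hc : c ∈ S := hw c (by simp)
      obtain ⟨W, hl, hg⟩ := ih hc hb (fun x hx => hw x (by simp [hx]))
      refine ⟨Walk.cons (by simpa using h : (G.induce S).Adj ⟨a, ha⟩ ⟨c, hc⟩) W, by simp [hl], ?_⟩
      simp [hg]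

/-- Project a walk of `G.induce S` down to `G`. -/
lemma exists_downWalk {x y : S} (W : (G.induce S).Walk x y) :
    ∃ w : G.Walk x y, w.length = W.length ∧
      walkGain φ w = walkGain (fun i j : S => φ i j) W ∧ ∀ z ∈ w.support, z ∈ S := by
  induction W with
  | nil => exact ⟨Walk.nil, rfl, rfl, by rintro z hz; simp at hz; subst hz; exact Subtype.coe_prop _⟩
  | @cons a c b h W ih =>
      obtain ⟨w, hl, hg, hs⟩ := ih
      refine ⟨Walk.cons (by simpa using h) w, by simp [hl], by simp [hg], ?_⟩
      rintro z hz
      simp only [Walk.support_cons, List.mem_cons] at hz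
      rcases hz with hz | hz
      · subst hz; exact Subtype.coe_prop a
      · exact hs z hz

end Aux
section Aux2
open SimpleGraph

variable {G : SimpleGraph V} {S B : Set V}

/-- Connectivity of an induced subgraph, phrased by walks in the ambient graph. -/
def ConnIn (G : SimpleGraph V) (S : Set V) : Prop :=
  S.Nonempty ∧ ∀ u ∈ S, ∀ v ∈ S, ∃ w : G.Walk u v, ∀ x ∈ w.support, x ∈ S

lemma connIn_anchor {z : V} (hz : z ∈ S)
    (h : ∀ u ∈ S, ∃ w : G.Walk u z, ∀ x ∈ w.support, x ∈ S) : ConnIn G S := by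
  refine ⟨⟨z, hz⟩, fun u hu v hv => ?_⟩
  obtain ⟨w1, h1⟩ := h u hu
  obtain ⟨w2, h2⟩ := h v hv
  refine ⟨w1.append w2.reverse, fun x hx => ?_⟩
  rcases (Walk.mem_support_append_iff _ _).1 hx with hx | hx
  · exact h1 x hx
  · exact h2 x (by simpa [Walk.support_reverse] using hx)

lemma connIn_iff_induce_connected : ConnIn G S ↔ (G.induce S).Connected := by
  constructor
  · rintro ⟨⟨z, hz⟩, h⟩
    rw [connected_iff]
    refine ⟨fun x y => ?_, ⟨⟨z, hz⟩⟩⟩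
    obtain ⟨w, hw⟩ := h x x.2 y y.2
    obtain ⟨W, -, -⟩ := exists_upWalk (φ := fun _ _ => (1:ℂ)) w x.2 y.2 hw
    exact ⟨(W.copy (by simp) (by simp))⟩
  · rintro h
    refine ⟨?_, fun u hu v hv => ?_⟩
    · obtain ⟨⟨x, hx⟩⟩ := h.nonempty
      exact ⟨x, hx⟩
    · obtain ⟨W⟩ := h.preconnected ⟨u, hu⟩ ⟨v, hv⟩
      obtain ⟨w, -, -, hs⟩ := exists_downWalk (φ := fun _ _ => (1:ℂ)) W
      exact ⟨w, hs⟩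

lemma IsBiconnectedSet.connIn (h : IsBiconnectedSet G S) : ConnIn G S :=
  connIn_iff_induce_connected.2 h.1

lemma IsBiconnectedSet.connIn_diff (h : IsBiconnectedSet G S) {v : V} (hv : v ∈ S)
    (hne : (S \ {v}).Nonempty) : ConnIn G (S \ {v}) :=
  connIn_iff_induce_connected.2 (h.2 v hv hne)

lemma isBiconnected_of_connIn (h1 : ConnIn G S)
    (h2 : ∀ v ∈ S, (S \ {v}).Nonempty → ConnIn G (S \ {v})) : IsBiconnectedSet G S :=
  ⟨connIn_iff_induce_connected.1 h1, fun v hv hne =>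
    connIn_iff_induce_connected.1 (h2 v hv hne)⟩

end Aux2
section Aux3
open SimpleGraph

variable {G : SimpleGraph V} {S B : Set V}

/-- Split a walk at the first vertex satisfying `Q`. -/
lemma exists_split_first (Q : V → Prop) :
    ∀ {a b : V} (w : G.Walk a b), (∃ x ∈ w.support, Q x) →
    ∃ (c : V) (_ : Q c) (w₁ : G.Walk a c) (w₂ : G.Walk c b),
      w = w₁.append w₂ ∧ ∀ x ∈ w₁.support, Q x → x = c := by
  intro a b w
  induction w with
  | nil =>
      rintro ⟨x, hx, hQ⟩
      simp only [Walk.support_nil, List.mem_singleton] at hx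
      subst hx
      exact ⟨_, hQ, Walk.nil, Walk.nil, rfl, by simp⟩
  | @cons a c b h w ih =>
      rintro ⟨x, hx, hQ⟩
      by_cases hQa : Q a
      · exact ⟨a, hQa, Walk.nil, Walk.cons h w, rfl, by simp⟩
      · have hx' : x ∈ w.support := by
          simp only [Walk.support_cons, List.mem_cons] at hx
          rcases hx with rfl | hx
          · exact absurd hQ hQa
          · exact hx
        obtain ⟨d, hQd, w₁, w₂, heq, hfirst⟩ := ih ⟨x, hx', hQ⟩
        refine ⟨d, hQd, Walk.cons h w₁, w₂, by rw [heq]; rfl, ?_⟩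
        intro y hy hQy
        simp only [Walk.support_cons, List.mem_cons] at hy
        rcases hy with rfl | hy
        · exact absurd hQy hQa
        · exact hfirst y hy hQy

/-- Split a walk at any vertex of its support. -/
lemma exists_split {a b x : V} (w : G.Walk a b) (hx : x ∈ w.support) :
    ∃ (w₁ : G.Walk a x) (w₂ : G.Walk x b), w = w₁.append w₂ :=
  ⟨w.takeUntil x hx, w.dropUntil x hx, (w.take_spec hx).symm⟩

/-- Facts about a path split into two pieces. -/
lemma isPath_split {a x b : V} {w₁ : G.Walk a x} {w₂ : G.Walk x b}
    (h : (w₁.append w₂).IsPath) :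
    w₁.IsPath ∧ w₂.IsPath ∧ ∀ y, y ∈ w₁.support → y ∈ w₂.support → y = x := by
  have hnd : (w₁.support ++ w₂.support.tail).Nodup := by
    rw [← Walk.support_append]; exact h.2
  rw [List.nodup_append] at hnd
  obtain ⟨h1, h2, h3⟩ := hnd
  refine ⟨Walk.isPath_def _ |>.2 h1, Walk.isPath_def _ |>.2 ?_, fun y hy1 hy2 => ?_⟩
  · rw [Walk.support_eq_cons w₂, List.nodup_cons]
    exact ⟨fun hmem => h3 _ (w₁.end_mem_support) _ hmem rfl, h2⟩
  · by_contra hne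
    have : y ∈ w₂.support.tail := by
      rw [Walk.support_eq_cons w₂, List.mem_cons] at hy2
      rcases hy2 with hy2 | hy2
      · exact absurd hy2 hne
      · exact hy2
    exact h3 y hy1 y this rfl

end Aux3
section Aux4
open SimpleGraph

variable {G : SimpleGraph V} {B : Set V}

/-- From any vertex of a path one can walk along the path to one of its ends,
avoiding any fixed other vertex. -/
lemma path_walk_avoid {a c u v : V} {P : G.Walk a c} (hP : P.IsPath) (hu : u ∈ P.support)
    (huv : u ≠ v) :
    ∃ (e : V) (w : G.Walk u e), (e = a ∨ e = c) ∧
      ∀ x ∈ w.support, x ∈ P.support ∧ x ≠ v := by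
  obtain ⟨A, C, heq⟩ := exists_split P hu
  obtain ⟨hA, hC, hmeet⟩ := isPath_split (heq ▸ hP)
  have hAsub : A.support ⊆ P.support := by
    rw [heq]; exact Walk.subset_support_append_left _ _
  have hCsub : C.support ⊆ P.support := by
    rw [heq]; exact Walk.subset_support_append_right _ _
  by_cases hvC : v ∈ C.support
  · refine ⟨a, A.reverse, Or.inl rfl, fun x hx => ?_⟩
    rw [Walk.support_reverse, List.mem_reverse] at hx
    refine ⟨hAsub hx, fun hxv => ?_⟩
    subst hxv
    exact huv (hmeet x hx hvC).symm
  · refine ⟨c, C, Or.inr rfl, fun x hx => ⟨hCsub hx, fun hxv => hvC (hxv ▸ hx)⟩⟩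

/-- A block admits no "ear": a nontrivial path between two of its vertices whose
interior avoids the block. -/
lemma block_no_ear (hB : IsBlock G B) {a c : V} (P : G.Walk a c) (hP : P.IsPath)
    (ha : a ∈ B) (hc : c ∈ B) (hac : a ≠ c)
    (hint : ∀ x ∈ P.support, x ∈ B → x = a ∨ x = c) (hlen : 2 ≤ P.length) : False := by
  set B' : Set V := B ∪ {x | x ∈ P.support} with hB'def
  have hBsub : B ⊆ B' := Set.subset_union_left
  have hPsub : ∀ x ∈ P.support, x ∈ B' := fun x hx => Or.inr hx
  have hconnB : ConnIn G B := hB.1.connIn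
  -- connectivity of B'
  have hB'conn : ConnIn G B' := by
    refine connIn_anchor (hBsub ha) (fun u hu => ?_)
    rcases hu with hu | hu
    · obtain ⟨w, hw⟩ := hconnB.2 u hu a ha
      exact ⟨w, fun x hx => hBsub (hw x hx)⟩
    · obtain ⟨A, C, heq⟩ := exists_split P hu
      refine ⟨A.reverse, fun x hx => ?_⟩
      rw [Walk.support_reverse, List.mem_reverse] at hx
      exact hPsub x (by rw [heq]; exact Walk.subset_support_append_left _ _ hx)
  -- no cut vertices in B'
  have hcut : ∀ v ∈ B', (B' \ {v}).Nonempty → ConnIn G (B' \ {v}) := by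
    intro v hv hne
    set z : V := if v = a then c else a with hzdef
    have hzB : z ∈ B := by rw [hzdef]; split <;> assumption
    have hzv : z ≠ v := by
      rw [hzdef]; split
      · rename_i h; rw [h]; exact hac.symm
      · rename_i h; exact fun hh => h hh.symm
    -- walks from B-vertices to z avoiding v
    have step1 : ∀ u ∈ B, u ≠ v → ∃ w : G.Walk u z, ∀ x ∈ w.support, x ∈ B' \ {v} := by
      intro u hu huv
      by_cases hvB : v ∈ B
      · have hne' : (B \ {v}).Nonempty := ⟨u, hu, huv⟩
        obtain ⟨w, hw⟩ := (hB.1.connIn_diff hvB hne').2 u ⟨hu, huv⟩ z ⟨hzB, hzv⟩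
        exact ⟨w, fun x hx => ⟨hBsub (hw x hx).1, (hw x hx).2⟩⟩
      · obtain ⟨w, hw⟩ := hconnB.2 u hu z hzB
        exact ⟨w, fun x hx => ⟨hBsub (hw x hx), fun hxv => hvB (hxv ▸ hw x hx)⟩⟩
    refine connIn_anchor (z := z) ⟨hBsub hzB, hzv⟩ (fun u hu => ?_)
    obtain ⟨hu, huv⟩ := hu
    have huv' : u ≠ v := huv
    rcases hu with hu | hu
    · exact step1 u hu huv'
    · obtain ⟨e, w₁, he, hw₁⟩ := path_walk_avoid hP hu huv'
      have heB : e ∈ B := by rcases he with rfl | rfl <;> assumption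
      have hev : e ≠ v := (hw₁ e w₁.end_mem_support).2
      obtain ⟨w₂, hw₂⟩ := step1 e heB hev
      refine ⟨w₁.append w₂, fun x hx => ?_⟩
      rcases (Walk.mem_support_append_iff _ _).1 hx with hx | hx
      · exact ⟨hPsub x (hw₁ x hx).1, (hw₁ x hx).2⟩
      · exact hw₂ x hx
  have hbic : IsBiconnectedSet G B' := isBiconnected_of_connIn hB'conn hcut
  have hBeq : B' = B := hB.2 B' hBsub hbic
  -- the second vertex of P is in B' but not in B
  cases P with
  | nil => simp at hlen
  | @cons a x₀ c h P' =>
      have hx₀P : x₀ ∈ (Walk.cons h P').support := by simp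
      have hx₀B : x₀ ∈ B := by rw [← hBeq]; exact hPsub x₀ hx₀P
      rcases hint x₀ hx₀P hx₀B with rfl | rfl
      · exact h.ne rfl
      · have h1 := ((Walk.cons_isPath_iff _ _).1 hP).1
        cases P' with
        | nil => simp at hlen
        | cons h' P'' =>
            exact ((Walk.cons_isPath_iff _ _).1 h1).2 P''.end_mem_support
end Aux4
section Aux5
open SimpleGraph

variable {G : SimpleGraph V} {B : Set V}

/-- Any path between two vertices of a block stays inside the block. -/
lemma block_path_support (hB : IsBlock G B) {u v : V} (hu : u ∈ B) (hv : v ∈ B)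
    {p : G.Walk u v} (hp : p.IsPath) : ∀ x ∈ p.support, x ∈ B := by
  by_contra hcon
  push_neg at hcon
  obtain ⟨y, hy, hyB⟩ := hcon
  obtain ⟨x₀, hx₀B, T, D, heq, hTfirst⟩ :=
    exists_split_first (fun x => x ∉ B) p ⟨y, hy, hyB⟩
  obtain ⟨hT, hD, hmeetTD⟩ := isPath_split (heq ▸ hp)
  -- split D at first B vertex
  obtain ⟨c, hcB, D₁, D₂, heqD, hDfirst⟩ :=
    exists_split_first (fun x => x ∈ B) D ⟨v, D.end_mem_support, hv⟩
  -- split T.reverse at first B vertex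
  obtain ⟨a, haB, E₁, E₂, heqE, hEfirst⟩ :=
    exists_split_first (fun x => x ∈ B) T.reverse ⟨u, by simp, hu⟩
  obtain ⟨hE₁, hE₂, hmeetE⟩ := isPath_split (heqE ▸ hT.reverse)
  obtain ⟨hD₁, hD₂, hmeetD⟩ := isPath_split (heqD ▸ hD)
  have hE₁T : E₁.support ⊆ T.support := by
    intro x hx
    have : x ∈ T.reverse.support := by
      rw [heqE]; exact Walk.subset_support_append_left _ _ hx
    simpa [Walk.support_reverse] using this
  have hD₁D : D₁.support ⊆ D.support := by
    rw [heqD]; exact Walk.subset_support_append_left _ _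
  have hx₀a : x₀ ≠ a := fun h => hx₀B (h ▸ haB)
  have hx₀c : x₀ ≠ c := fun h => hx₀B (h ▸ hcB)
  have hac : a ≠ c := by
    intro h
    exact hx₀a (hmeetTD a (hE₁T E₁.end_mem_support) (hD₁D (h ▸ D₁.end_mem_support))).symm
  -- the ear from a to c through x₀
  set P : G.Walk a c := E₁.reverse.append D₁ with hPdef
  have hPsup : ∀ x ∈ P.support, x ∈ E₁.support ∨ x ∈ D₁.support := by
    intro x hx
    rcases (Walk.mem_support_append_iff _ _).1 hx with hx | hx
    · left; simpa [Walk.support_reverse] using hx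
    · right; exact hx
  have hint : ∀ x ∈ P.support, x ∈ B → x = a ∨ x = c := by
    intro x hx hxB
    rcases hPsup x hx with hx | hx
    · exact Or.inl (hEfirst x hx hxB)
    · exact Or.inr (hDfirst x hx hxB)
  have hPpath : P.IsPath := by
    rw [Walk.isPath_def, Walk.support_append, List.nodup_append]
    refine ⟨hE₁.reverse.2, (hD₁.2 : D₁.support.Nodup).sublist (List.tail_sublist _), ?_⟩
    intro x hxe y hxd hxy
    subst hxy
    rw [Walk.support_reverse, List.mem_reverse] at hxe
    have hxd' : x ∈ D₁.support := List.mem_of_mem_tail hxd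
    have hxt : x ∈ T.support := hE₁T hxe
    have hxD : x ∈ D.support := hD₁D hxd'
    have : x = x₀ := hmeetTD x hxt hxD
    subst this
    have : D₁.support.Nodup := hD₁.2
    rw [Walk.support_eq_cons D₁, List.nodup_cons] at this
    exact this.1 hxd
  have hlen : 2 ≤ P.length := by
    have h1 : E₁.length ≠ 0 := fun h => hx₀a (Walk.eq_of_length_eq_zero h)
    have h2 : D₁.length ≠ 0 := fun h => hx₀c (Walk.eq_of_length_eq_zero h)
    have : P.length = E₁.reverse.length + D₁.length := Walk.length_append _ _
    rw [Walk.length_reverse] at this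
    omega
  exact block_no_ear hB P hPpath haB hcB hac hint hlen

/-- walks of minimal length are paths. -/
lemma isPath_of_length_eq_dist (hconn : G.Connected) {s t : V} (p : G.Walk s t)
    (hp : p.length = G.dist s t) : p.IsPath := by
  induction p with
  | nil => exact Walk.IsPath.nil
  | @cons s x t h w ih =>
      have hsx : G.dist s x ≤ 1 := by
        simpa using SimpleGraph.dist_le (Walk.cons h (Walk.nil : G.Walk x x))
      have htri : G.dist s t ≤ G.dist s x + G.dist x t := hconn.dist_triangle
      have hxw : G.dist x t ≤ w.length := SimpleGraph.dist_le w
      have hlc : (Walk.cons h w).length = w.length + 1 := Walk.length_cons h w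
      have hw : w.length = G.dist x t := by omega
      have hwP : w.IsPath := ih hw
      refine hwP.cons ?_
      intro hs
      obtain ⟨w₁, w₂, heq⟩ := exists_split w hs
      have : G.dist s t ≤ w₂.length := SimpleGraph.dist_le w₂
      have : w.length = w₁.length + w₂.length := by rw [heq]; exact Walk.length_append _ _
      omega

/-- distances inside a block agree with global distances. -/
lemma dist_induce_block (hconn : G.Connected) (hB : IsBlock G B) (u v : B) :
    (G.induce B).dist u v = G.dist u v := by
  refine le_antisymm ?_ ?_
  · obtain ⟨p, hp⟩ := hconn.exists_walk_length_eq_dist (u : V) (v : V)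
    have hpP : p.IsPath := isPath_of_length_eq_dist hconn p hp
    have hsup := block_path_support hB u.2 v.2 hpP
    obtain ⟨W, hWl, -⟩ := exists_upWalk (φ := fun _ _ => (1:ℂ)) p u.2 v.2 hsup
    calc (G.induce B).dist u v ≤ W.length := SimpleGraph.dist_le (W.copy (by simp) (by simp))
    _ = G.dist u v := by rw [hWl, hp]
  · have hconnB : (G.induce B).Connected := hB.1.1
    obtain ⟨W, hW⟩ := hconnB.exists_walk_length_eq_dist u v
    obtain ⟨w, hwl, -, -⟩ := exists_downWalk (φ := fun _ _ => (1:ℂ)) W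
    calc G.dist (u : V) (v : V) ≤ w.length := SimpleGraph.dist_le w
    _ = (G.induce B).dist u v := by rw [hwl, hW]

end Aux5
section Aux6
open SimpleGraph

variable {G : SimpleGraph V} {B : Set V}

/-- Every biconnected set is contained in a block. -/
lemma exists_block_superset {S : Set V} (hS : IsBiconnectedSet G S) :
    ∃ B : Set V, IsBlock G B ∧ S ⊆ B := by
  have key : ∀ c ⊆ {T : Set V | IsBiconnectedSet G T}, IsChain (fun x1 x2 => x1 ⊆ x2) c →
      c.Nonempty → ∃ ub ∈ {T : Set V | IsBiconnectedSet G T}, ∀ s ∈ c, s ⊆ ub := by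
    intro c hc hchain hcne
    refine ⟨⋃₀ c, ?_, fun T hT => Set.subset_sUnion_of_mem hT⟩
    have hmax2 : ∀ T₁ ∈ c, ∀ T₂ ∈ c, ∃ T ∈ c, T₁ ⊆ T ∧ T₂ ⊆ T := by
      intro T₁ h₁ T₂ h₂
      rcases hchain.total h₁ h₂ with h | h
      · exact ⟨T₂, h₂, h, subset_rfl⟩
      · exact ⟨T₁, h₁, subset_rfl, h⟩
    refine isBiconnected_of_connIn ⟨?_, ?_⟩ ?_
    · obtain ⟨T, hT⟩ := hcne
      obtain ⟨x, hx⟩ := (hc hT).connIn.1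
      exact ⟨x, T, hT, hx⟩
    · rintro u ⟨T₁, h₁, hu⟩ v ⟨T₂, h₂, hv⟩
      obtain ⟨T, hT, hs₁, hs₂⟩ := hmax2 T₁ h₁ T₂ h₂
      obtain ⟨w, hw⟩ := (hc hT).connIn.2 u (hs₁ hu) v (hs₂ hv)
      exact ⟨w, fun x hx => ⟨T, hT, hw x hx⟩⟩
    · rintro x ⟨Tx, hTx, hx⟩ hne
      refine ⟨hne, ?_⟩
      rintro u ⟨⟨T₁, h₁, hu⟩, hux⟩ v ⟨⟨T₂, h₂, hv⟩, hvx⟩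
      obtain ⟨T', hT', hs₁, hs₂⟩ := hmax2 T₁ h₁ T₂ h₂
      obtain ⟨T, hT, hs₁', hsx⟩ := hmax2 T' hT' Tx hTx
      have hxT : x ∈ T := hsx hx
      obtain ⟨w, hw⟩ := ((hc hT).connIn_diff hxT ⟨u, hs₁' (hs₁ hu), hux⟩).2
        u ⟨hs₁' (hs₁ hu), hux⟩ v ⟨hs₁' (hs₂ hv), hvx⟩
      exact ⟨w, fun y hy => ⟨⟨T, hT, (hw y hy).1⟩, (hw y hy).2⟩⟩
  obtain ⟨m, hSm, hm⟩ := zorn_subset_nonempty {T : Set V | IsBiconnectedSet G T} key S hS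
  exact ⟨m, ⟨hm.prop, fun B' hsub hbic => (hm.2 hbic hsub).antisymm hsub⟩, hSm⟩

/-- An edge gives a biconnected pair. -/
lemma pair_biconnected {u v : V} (h : G.Adj u v) : IsBiconnectedSet G {u, v} := by
  have hmem : ∀ w ∈ ({u, v} : Set V), w = u ∨ w = v := fun w hw => hw
  refine isBiconnected_of_connIn ?_ ?_
  · refine connIn_anchor (z := u) (Or.inl rfl) ?_
    rintro w hw
    rcases hmem w hw with rfl | rfl
    · exact ⟨Walk.nil, by simp⟩
    · exact ⟨Walk.cons h.symm Walk.nil, by simp⟩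
  · intro x hx hne
    obtain ⟨z, hz⟩ := hne
    refine connIn_anchor (z := z) hz ?_
    intro w hw
    have hwz : w = z := by
      rcases hmem w hw.1 with rfl | rfl <;> rcases hmem z hz.1 with h' | h' <;>
        rcases hmem x hx with rfl | rfl <;> simp_all
    subst hwz
    refine ⟨Walk.nil, ?_⟩
    intro y hy
    simp only [Walk.support_nil, List.mem_singleton] at hy
    subst hy
    exact hw

/-- Split a walk at the last vertex belonging to `B`. -/
lemma split_at_last {s t : V} (hsB : s ∈ B) (w : G.Walk s t) :
    ∃ (c : V) (_ : c ∈ B) (w₁ : G.Walk s c) (w₂ : G.Walk c t),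
      w = w₁.append w₂ ∧ ∀ x ∈ w₂.support, x ∈ B → x = c := by
  obtain ⟨c, hc, R₁, R₂, hre, hfirst⟩ := exists_split_first (fun x => x ∈ B) w.reverse
    ⟨s, by simp, hsB⟩
  refine ⟨c, hc, R₂.reverse, R₁.reverse, ?_, ?_⟩
  · have := congrArg Walk.reverse hre
    rwa [Walk.reverse_reverse, Walk.reverse_append] at this
  · intro x hx
    rw [Walk.support_reverse, List.mem_reverse] at hx
    exact hfirst x hx

/-- The last `B`-vertex of walks to a common endpoint is unique. -/
lemma last_eq (hB : IsBlock G B) {c c' t : V} (hcB : c ∈ B) (hc'B : c' ∈ B)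
    (w₂ : G.Walk c t) (w₂' : G.Walk c' t)
    (h2 : ∀ x ∈ w₂.support, x ∈ B → x = c) (h2' : ∀ x ∈ w₂'.support, x ∈ B → x = c') :
    c = c' := by
  by_contra hne
  set w : G.Walk c c' := w₂.append w₂'.reverse with hwdef
  have hwB : ∀ x ∈ w.support, x ∈ B → x = c ∨ x = c' := by
    intro x hx hxB
    rcases (Walk.mem_support_append_iff _ _).1 hx with hx | hx
    · exact Or.inl (h2 x hx hxB)
    · right
      rw [Walk.support_reverse, List.mem_reverse] at hx
      exact h2' x hx hxB
  have hP := w.bypass_isPath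
  have hint : ∀ x ∈ w.bypass.support, x ∈ B → x = c ∨ x = c' :=
    fun x hx => hwB x (w.support_bypass_subset hx)
  have hlen : 2 ≤ w.bypass.length := by
    have hedge : ∀ e ∈ w.bypass.edges, e ∈ w₂.edges ∨ e ∈ w₂'.edges := by
      intro e he
      have := w.edges_bypass_subset he
      rw [hwdef, Walk.edges_append, List.mem_append, Walk.edges_reverse,
        List.mem_reverse] at this
      exact this
    cases hby : w.bypass with
    | nil => exact absurd rfl hne
    | @cons _ y _ h' P' =>
        cases P' with
        | nil =>
            exfalso
            have he : s(c, c') ∈ w.bypass.edges := by rw [hby]; simp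
            rcases hedge _ he with he | he
            · exact hne (h2 c' (Walk.snd_mem_support_of_mem_edges w₂ he) hc'B).symm
            · exact hne (h2' c (Walk.fst_mem_support_of_mem_edges w₂' he) hcB)
        | cons h'' P'' => simp [Walk.length_cons]
  exact block_no_ear hB w.bypass hP hcB hc'B hne hint hlen

end Aux6
/-- a gain graph on a connected graph is distance compatible iff each of its
blocks (with the restricted gain function) is distance compatible. -/
theorem distCompatible_iff_blocks {V : Type*} (G : SimpleGraph V) (hconn : G.Connected)
    (φ : V → V → ℂ) (hφ : IsGain G φ) :
    DistCompatible G φ ↔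
      ∀ B : Set V, IsBlock G B →
        DistCompatible (G.induce B) (fun i j : B => φ i j) := by
  constructor
  · intro hDC B hB s t p q hp hq
    obtain ⟨p', hpl, hpg, -⟩ := exists_downWalk (φ := φ) p
    obtain ⟨q', hql, hqg, -⟩ := exists_downWalk (φ := φ) q
    rw [← hpg, ← hqg]
    exact hDC s t p' q' (by rw [hpl, hp, dist_induce_block hconn hB s t])
      (by rw [hql, hq, dist_induce_block hconn hB s t])
  · intro hblocks
    suffices H : ∀ (n : ℕ) (s t : V) (p q : G.Walk s t), G.dist s t = n → p.length = n →
        q.length = n → walkGain φ p = walkGain φ q by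
      intro s t p q hp hq
      exact H (G.dist s t) s t p q rfl hp hq
    intro n
    induction n using Nat.strong_induction_on with
    | _ n IH =>
    intro s t p q hdist hp hq
    rcases Nat.eq_zero_or_pos n with rfl | hn
    · have hp1 : walkGain φ p = 1 := by
        cases p with
        | nil => rfl
        | cons h w => simp at hp
      have hq1 : walkGain φ q = 1 := by
        cases q with
        | nil => rfl
        | cons h w => simp at hq
      rw [hp1, hq1]
    · cases p with
      | nil => rw [SimpleGraph.Walk.length_nil] at hp; omega
      | @cons s v₁ t hadj p' =>
        have hpP : (SimpleGraph.Walk.cons hadj p').IsPath :=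
          isPath_of_length_eq_dist hconn _ (by rw [hp, hdist])
        have hqP : q.IsPath := isPath_of_length_eq_dist hconn q (by rw [hq, hdist])
        obtain ⟨B, hB, hsub⟩ := exists_block_superset (pair_biconnected hadj)
        have hsB : s ∈ B := hsub (by simp)
        have hv₁B : v₁ ∈ B := hsub (by simp)
        obtain ⟨c, hcB, p₁, p₂, hpe, hp2B⟩ := split_at_last hsB (SimpleGraph.Walk.cons hadj p')
        obtain ⟨c', hc'B, q₁, q₂, hqe, hq2B⟩ := split_at_last hsB q
        have hcc' : c = c' := last_eq hB hcB hc'B p₂ q₂ hp2B hq2B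
        subst hcc'
        have hl : p₁.length + p₂.length = n := by
          rw [← SimpleGraph.Walk.length_append, ← hpe, hp]
        have hlq : q₁.length + q₂.length = n := by
          rw [← SimpleGraph.Walk.length_append, ← hqe, hq]
        have hd1 : G.dist s c ≤ p₁.length := SimpleGraph.dist_le p₁
        have hd2 : G.dist c t ≤ p₂.length := SimpleGraph.dist_le p₂
        have hd1q : G.dist s c ≤ q₁.length := SimpleGraph.dist_le q₁
        have hd2q : G.dist c t ≤ q₂.length := SimpleGraph.dist_le q₂
        have htri : G.dist s t ≤ G.dist s c + G.dist c t := hconn.dist_triangle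
        have hp₁ : p₁.length = G.dist s c := by omega
        have hp₂ : p₂.length = G.dist c t := by omega
        have hq₁ : q₁.length = G.dist s c := by omega
        have hq₂ : q₂.length = G.dist c t := by omega
        have hcs : c ≠ s := by
          rintro rfl
          have h0 : p₁.length = 0 := by rw [hp₁, SimpleGraph.dist_self]
          have hnil : p₁ = SimpleGraph.Walk.nil := SimpleGraph.Walk.nil_iff_eq_nil.1 (SimpleGraph.Walk.length_eq_zero_iff.1 h0)
          have hv₁ : v₁ ∈ (SimpleGraph.Walk.cons hadj p').support := by simp
          rw [hpe] at hv₁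
          rcases (SimpleGraph.Walk.mem_support_append_iff _ _).1 hv₁ with hx | hx
          · rw [hnil] at hx
            simp only [SimpleGraph.Walk.support_nil, List.mem_singleton] at hx
            exact hadj.ne' hx
          · exact hadj.ne' (hp2B v₁ hx hv₁B)
        have hdsc : 0 < G.dist s c := hconn.pos_dist_of_ne (Ne.symm hcs)
        rw [hpe, hqe, walkGain_append, walkGain_append]
        have hgain2 : walkGain φ p₂ = walkGain φ q₂ :=
          IH (G.dist c t) (by omega) c t p₂ q₂ rfl hp₂ hq₂
        have hgain1 : walkGain φ p₁ = walkGain φ q₁ := by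
          have hp₁P : p₁.IsPath := (isPath_split (hpe ▸ hpP)).1
          have hq₁P : q₁.IsPath := (isPath_split (hqe ▸ hqP)).1
          have hps := block_path_support hB hsB hcB hp₁P
          have hqs := block_path_support hB hsB hcB hq₁P
          obtain ⟨P₁, hPl, hPg⟩ := exists_upWalk (φ := φ) p₁ hsB hcB hps
          obtain ⟨Q₁, hQl, hQg⟩ := exists_upWalk (φ := φ) q₁ hsB hcB hqs
          rw [← hPg, ← hQg]
          exact hblocks B hB ⟨s, hsB⟩ ⟨c, hcB⟩ P₁ Q₁
            (by rw [hPl, hp₁, dist_induce_block hconn hB])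
            (by rw [hQl, hq₁, dist_induce_block hconn hB])
        rw [hgain1, hgain2]

end GG
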